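/- Let A be an m×L matrix with entries in {0,1} and c ∈ ℕ^m with m ≥ 2. If A·x = c has a solution over ℕ, then it has a solution over ℕ with at most (5/2)·m·log₂ m + 1 non-zero entries. -/

import Mathlib

open Finset

lemma exchange_lemma {m L : ℕ} (A : Matrix (Fin m) (Fin L) ℕ) (c : Fin m → ℕ)
    (b : Fin L → ℕ) (hb : A.mulVec b = c)
    (D1 D2 : Finset (Fin L)) (hdisj : Disjoint D1 D2) (hne : D2.Nonempty)
    (hsum : ∀ i, ∑ j ∈ D1, A i j = ∑ j ∈ D2, A i j)
    (hD1 : ∀ j ∈ D1, b j ≠ 0) (hD2 : ∀ j ∈ D2, b j ≠ 0) :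
    ∃ b' : Fin L → ℕ, A.mulVec b' = c ∧
      (univ.filter fun j => b' j ≠ 0).card < (univ.filter fun j => b j ≠ 0).card := by
  classical
  obtain ⟨j0, hj0, hmin⟩ := D2.exists_min_image b hne
  set t := b j0 with ht
  have hj0D1 : j0 ∉ D1 := fun hmem => (Finset.disjoint_left.mp hdisj hmem) hj0
  set b' : Fin L → ℕ := fun j => if j ∈ D1 then b j + t else if j ∈ D2 then b j - t else b j with hb'
  refine ⟨b', ?_, ?_⟩
  · funext i
    have hbi : ∑ j, A i j * b j = c i := by
      have := congrFun hb i
      simpa [Matrix.mulVec, dotProduct] using this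
    have e2 : ∀ (D : Finset (Fin L)), t * ∑ j ∈ D, A i j = ∑ j, (if j ∈ D then A i j * t else 0) := by
      intro D
      rw [Finset.sum_ite_mem, univ_inter, Finset.mul_sum]
      exact Finset.sum_congr rfl fun j _ => mul_comm _ _
    have key : (∑ j, A i j * b' j) + t * ∑ j ∈ D2, A i j
        = (∑ j, A i j * b j) + t * ∑ j ∈ D1, A i j := by
      rw [e2, e2, ← Finset.sum_add_distrib, ← Finset.sum_add_distrib]
      refine Finset.sum_congr rfl fun j _ => ?_
      by_cases h1 : j ∈ D1
      · have h2 : j ∉ D2 := Finset.disjoint_left.mp hdisj h1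
        simp only [hb', h1, h2, if_true, if_false]
        ring
      · by_cases h2 : j ∈ D2
        · have hle : t ≤ b j := hmin j h2
          simp only [hb', h1, h2, if_true, if_false]
          rw [← Nat.mul_add, Nat.sub_add_cancel hle]
          ring
        · simp [hb', h1, h2]
    rw [hsum i] at key
    have key2 : (∑ j, A i j * b' j) = ∑ j, A i j * b j := Nat.add_right_cancel key
    simpa [Matrix.mulVec, dotProduct, key2] using hbi
  · have hb'j0 : b' j0 = 0 := by simp [hb', hj0D1, hj0, ht]
    have hsub : (univ.filter fun j => b' j ≠ 0) ⊆ (univ.filter fun j => b j ≠ 0).erase j0 := by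
      intro j hj
      rw [mem_filter] at hj
      rw [Finset.mem_erase, mem_filter]
      refine ⟨?_, mem_univ _, ?_⟩
      · rintro rfl; exact hj.2 hb'j0
      · intro hbj
        apply hj.2
        by_cases h1 : j ∈ D1
        · exact absurd hbj (hD1 j h1)
        · by_cases h2 : j ∈ D2
          · exact absurd hbj (hD2 j h2)
          · simp [hb', h1, h2, hbj]
    have hj0mem : j0 ∈ univ.filter fun j => b j ≠ 0 := by
      rw [mem_filter]; exact ⟨mem_univ _, hD2 j0 hj0⟩
    calc (univ.filter fun j => b' j ≠ 0).card ≤ ((univ.filter fun j => b j ≠ 0).erase j0).card :=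
          card_le_card hsub
      _ < (univ.filter fun j => b j ≠ 0).card := card_erase_lt_of_mem hj0mem


lemma poly_core (t : ℝ) (ht : 0 ≤ t) (ht2 : 2 ≤ t^2) :
    (0:ℝ) < 0.693*t^5 - 1.25*t^4 + 0.480249*t^3 + 0.767*t^2 - 1.3864 := by
  have h14 : (1.41:ℝ) ≤ t := by nlinarith
  nlinarith [mul_nonneg (by linarith : (0:ℝ) ≤ t-1.41) (by nlinarith : (0:ℝ) ≤ t^2-2), mul_nonneg (by nlinarith : (0:ℝ) ≤ t^2-2) (by nlinarith : (0:ℝ) ≤ t^2-2), mul_nonneg (mul_nonneg (by nlinarith : (0:ℝ) ≤ t^2-2) (by nlinarith : (0:ℝ) ≤ t^2-2)) (by linarith : (0:ℝ) ≤ t), sq_nonneg (t-1.41), mul_nonneg (mul_nonneg ht ht) ht]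

set_option maxHeartbeats 1000000 in
lemma numeric_bound (m s : ℕ) (hm : 2 ≤ m) (hs : 2^s ≤ (s+1)^m) :
    (s:ℝ) ≤ (5/2) * m * Real.logb 2 m + 1 := by
  by_contra hcon
  push_neg at hcon
  have hl1 : (0.6931471803:ℝ) < Real.log 2 := Real.log_two_gt_d9
  have hl2 : Real.log 2 < 0.6931471808 := Real.log_two_lt_d9
  have hlpos : (0:ℝ) < Real.log 2 := by linarith
  have hM : (2:ℝ) ≤ (m:ℝ) := by exact_mod_cast hm
  have hMpos : (0:ℝ) < (m:ℝ) := by linarith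
  have hLgl : Real.logb 2 (m:ℝ) * Real.log 2 = Real.log (m:ℝ) := by
    rw [Real.logb]; field_simp
  have hlogM : Real.log 2 ≤ Real.log (m:ℝ) := Real.log_le_log (by norm_num) hM
  have hLg1 : 1 ≤ Real.logb 2 (m:ℝ) := by nlinarith
  set ℓ : ℝ := Real.log 2 with hldef
  set Lg : ℝ := Real.logb 2 (m:ℝ) with hLgdef
  set x : ℝ := (s:ℝ) with hxdef
  set x0 : ℝ := (5/2) * (m:ℝ) * Lg + 1 with hx0def
  clear_value ℓ Lg x x0
  have hx0 : 6 ≤ x0 := by nlinarith [mul_le_mul hM hLg1 (by norm_num) (by linarith : (0:ℝ) ≤ (m:ℝ))]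
  have hxx0 : x0 < x := hcon
  have hx0pos : (0:ℝ) < x0 + 1 := by linarith
  have hxpos : (0:ℝ) < x + 1 := by linarith
  -- step 1 : x * ℓ ≤ m * log (x+1)
  have h1 : x * ℓ ≤ (m:ℝ) * Real.log (x+1) := by
    have hcast : (2:ℝ)^s ≤ (x+1)^m := by
      rw [hxdef]; push_cast; exact_mod_cast hs
    have hlog := Real.log_le_log (by positivity) hcast
    rw [Real.log_pow, Real.log_pow] at hlog
    rw [← hxdef, ← hldef] at hlog
    exact hlog
  -- tangent line at x0
  have htan : Real.log (x+1) ≤ Real.log (x0+1) + (x - x0)/(x0+1) := by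
    have h := Real.log_le_sub_one_of_pos (show (0:ℝ) < (x+1)/(x0+1) by positivity)
    rw [Real.log_div (by linarith) (by linarith)] at h
    have he : (x+1)/(x0+1) - 1 = (x-x0)/(x0+1) := by field_simp; ring
    linarith [he ▸ h]
  -- inequality A : m ≤ (x0+1) * ℓ
  have hAineq : (m:ℝ) ≤ (x0+1) * ℓ := by
    nlinarith [mul_nonneg (sub_nonneg.mpr hLg1) (le_of_lt hMpos)]
  -- inequality B : m * log (x0+1) < x0 * ℓ
  have hBineq : (m:ℝ) * Real.log (x0+1) < x0 * ℓ := by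
    set t : ℝ := Real.sqrt (m:ℝ) with htdef
    have htnn : 0 ≤ t := Real.sqrt_nonneg _
    have htpos : 0 < t := Real.sqrt_pos.mpr hMpos
    have ht2 : t^2 = (m:ℝ) := Real.sq_sqrt (le_of_lt hMpos)
    have hlogt : Real.log (m:ℝ) = 2 * Real.log t := by
      rw [← ht2, Real.log_pow]; push_cast; ring
    have hlogM2 : Real.log (m:ℝ) ≤ ℓ + ((m:ℝ)/2 - 1) := by
      have h2 := Real.log_le_sub_one_of_pos (show (0:ℝ) < (m:ℝ)/2 by linarith)
      have h3 : Real.log ((m:ℝ)/2) = Real.log (m:ℝ) - ℓ := by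
        rw [Real.log_div (ne_of_gt hMpos) (by norm_num), hldef]
      linarith [h3 ▸ h2]
    -- key : x0 + 1 < t^5 + t^3 * ℓ
    have key : x0 + 1 < t^5 + t^3 * ℓ := by
      have hp := poly_core t htnn (by rw [ht2]; exact hM)
      have c1 : 0.693*t^5 ≤ ℓ*t^5 := by
        have h' : (0:ℝ) ≤ (ℓ - 0.693) * t^5 := mul_nonneg (by linarith) (pow_nonneg htnn 5)
        nlinarith [h']
      have c2 : 0.480249*t^3 ≤ ℓ^2*t^3 := by
        have hll : (0.480249:ℝ) ≤ ℓ^2 := by nlinarith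
        have h' : (0:ℝ) ≤ (ℓ^2 - 0.480249) * t^3 := mul_nonneg (by linarith) (pow_nonneg htnn 3)
        nlinarith [h']
      have c3 : ℓ*t^2 ≤ 0.6932*t^2 := by
        have h' : (0:ℝ) ≤ (0.6932 - ℓ) * t^2 := mul_nonneg (by linarith) (sq_nonneg t)
        nlinarith [h']
      have e1 : (m:ℝ) * (Lg*ℓ) ≤ t^2*ℓ + t^4/2 - t^2 := by
        rw [hLgl]
        calc (m:ℝ) * Real.log (m:ℝ) ≤ (m:ℝ) * (ℓ + ((m:ℝ)/2 - 1)) :=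
              mul_le_mul_of_nonneg_left hlogM2 (le_of_lt hMpos)
          _ = t^2*ℓ + t^4/2 - t^2 := by rw [← ht2]; ring
      have key2 : ℓ*(x0+1) < ℓ*(t^5 + t^3*ℓ) := by
        have hexp : ℓ*(x0+1) = (5/2) * ((m:ℝ) * (Lg*ℓ)) + 2*ℓ := by rw [hx0def]; ring
        have hrhs : ℓ*(t^5 + t^3*ℓ) = ℓ*t^5 + ℓ^2*t^3 := by ring
        rw [hexp, hrhs]
        linarith [hp, c1, c2, c3, e1, hl2]
      exact lt_of_mul_lt_mul_left key2 (le_of_lt hlpos)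
    -- log (x0+1) < 5 log t + ℓ/m
    have hlt : Real.log (x0+1) < 5 * Real.log t + ℓ/(m:ℝ) := by
      rw [Real.log_lt_iff_lt_exp (by linarith)]
      have hexp5 : Real.exp ((5:ℕ) * Real.log t) = t^5 := by
        rw [Real.exp_nat_mul, Real.exp_log htpos]
      have hexpadd : Real.exp (5 * Real.log t + ℓ/(m:ℝ)) = t^5 * Real.exp (ℓ/(m:ℝ)) := by
        rw [Real.exp_add, show Real.exp (5*Real.log t) = t^5 from by exact_mod_cast hexp5]
      rw [hexpadd]
      have hone : ℓ/(m:ℝ) + 1 ≤ Real.exp (ℓ/(m:ℝ)) := Real.add_one_le_exp _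
      have ht5 : (0:ℝ) < t^5 := pow_pos htpos 5
      have h35 : t^5 * (ℓ/(m:ℝ)) = t^3 * ℓ := by
        rw [← ht2]; field_simp
      nlinarith [mul_le_mul_of_nonneg_left hone (le_of_lt ht5)]
    have hfin : (m:ℝ) * (5 * Real.log t + ℓ/(m:ℝ)) = x0 * ℓ := by
      have : (m:ℝ) * (5 * Real.log t + ℓ/(m:ℝ)) = 5 * (m:ℝ) * Real.log t + ℓ := by
        field_simp
      rw [this, hx0def, show (5:ℝ) * (m:ℝ) * Real.log t = (5/2) * (m:ℝ) * (2 * Real.log t) by ring,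
        ← hlogt, ← hLgl]
      ring
    calc (m:ℝ) * Real.log (x0+1) < (m:ℝ) * (5 * Real.log t + ℓ/(m:ℝ)) :=
          (mul_lt_mul_iff_right₀ hMpos).mpr hlt
      _ = x0 * ℓ := hfin
  -- combine
  have hdiv : (m:ℝ) * ((x - x0)/(x0+1)) ≤ (x - x0) * ℓ := by
    rw [← mul_div_assoc, div_le_iff₀ hx0pos]
    nlinarith [hAineq]
  have hdistr : (m:ℝ)*(Real.log (x0+1) + (x-x0)/(x0+1))
      = (m:ℝ)*Real.log (x0+1) + (m:ℝ)*((x-x0)/(x0+1)) := mul_add _ _ _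
  have hstep := mul_le_mul_of_nonneg_left htan (le_of_lt hMpos)
  have hxl : (x-x0)*ℓ + x0*ℓ = x*ℓ := by ring
  linarith [h1, hstep, hdistr, hdiv, hBineq, hxl]


theorem boolean_system_sparse_solution_strong (m L : ℕ) (hm : 2 ≤ m)
    (A : Matrix (Fin m) (Fin L) ℕ) (hA : ∀ i j, A i j = 0 ∨ A i j = 1)
    (c : Fin m → ℕ) (h : ∃ b : Fin L → ℕ, A.mulVec b = c) :
    ∃ b : Fin L → ℕ, A.mulVec b = c ∧
      ((Finset.univ.filter (fun j => b j ≠ 0)).card : ℝ) ≤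
        (5 / 2) * m * Real.logb 2 m + 1 := by
  classical
  obtain ⟨b0, hb0⟩ := h
  have hPex : ∃ n, ∃ b : Fin L → ℕ, A.mulVec b = c ∧ (univ.filter fun j => b j ≠ 0).card = n :=
    ⟨_, b0, hb0, rfl⟩
  set s := Nat.find hPex with hsdef
  obtain ⟨b, hb, hcard⟩ := Nat.find_spec hPex
  refine ⟨b, hb, ?_⟩
  rw [hcard]
  apply numeric_bound m s hm
  by_contra hlt
  push_neg at hlt
  set S := univ.filter fun j => b j ≠ 0 with hSdef
  have hS : S.card = s := hcard
  have hbound : ∀ T ∈ S.powerset, ∀ i, ∑ j ∈ T, A i j ≤ s := by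
    intro T hT i
    calc ∑ j ∈ T, A i j ≤ ∑ j ∈ T, 1 :=
          Finset.sum_le_sum fun j _ => by rcases hA i j with h'|h' <;> omega
      _ = T.card := by simp
      _ ≤ S.card := card_le_card (mem_powerset.mp hT)
      _ = s := hS
  have hcards : (univ : Finset (Fin m → Fin (s+1))).card < S.powerset.card := by
    rw [card_powerset, hS, card_univ]
    simpa using hlt
  obtain ⟨T1, hT1, T2, hT2, hne, hfeq⟩ :=
    Finset.exists_ne_map_eq_of_card_lt_of_maps_to hcards
      (f := fun T i => (⟨min (∑ j ∈ T, A i j) s, Nat.lt_succ_of_le (min_le_right _ _)⟩ : Fin (s+1)))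
      (fun T _ => mem_univ _)
  have hsums : ∀ i, ∑ j ∈ T1, A i j = ∑ j ∈ T2, A i j := by
    intro i
    have h1 := congrArg Fin.val (congrFun hfeq i)
    simpa [min_eq_left (hbound T1 hT1 i), min_eq_left (hbound T2 hT2 i)] using h1
  have hdsum : ∀ i, ∑ j ∈ T1 \ T2, A i j = ∑ j ∈ T2 \ T1, A i j := by
    intro i
    have e1 := Finset.sum_inter_add_sum_sdiff T1 T2 (A i)
    have e2 := Finset.sum_inter_add_sum_sdiff T2 T1 (A i)
    rw [inter_comm] at e2
    have := hsums i
    omega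
  have hsubS : ∀ (T : Finset (Fin L)), T ∈ S.powerset → ∀ j ∈ T, b j ≠ 0 := by
    intro T hT j hj
    have := (mem_powerset.mp hT) hj
    rw [hSdef, mem_filter] at this
    exact this.2
  have hd1S : ∀ j ∈ T1 \ T2, b j ≠ 0 := fun j hj => hsubS T1 hT1 j (sdiff_subset hj)
  have hd2S : ∀ j ∈ T2 \ T1, b j ≠ 0 := fun j hj => hsubS T2 hT2 j (sdiff_subset hj)
  have hnonempty : (T1 \ T2).Nonempty ∨ (T2 \ T1).Nonempty := by
    by_contra hcon
    push_neg at hcon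
    obtain ⟨c1, c2⟩ := hcon
    rw [Finset.sdiff_eq_empty_iff_subset] at c1 c2
    exact hne (Finset.Subset.antisymm c1 c2)
  have hget : ∃ b' : Fin L → ℕ, A.mulVec b' = c ∧
      (univ.filter fun j => b' j ≠ 0).card < (univ.filter fun j => b j ≠ 0).card := by
    rcases hnonempty with hne1 | hne2
    · exact exchange_lemma A c b hb (T2 \ T1) (T1 \ T2) (disjoint_sdiff_sdiff) hne1
        (fun i => (hdsum i).symm) hd2S hd1S
    · exact exchange_lemma A c b hb (T1 \ T2) (T2 \ T1) (disjoint_sdiff_sdiff) hne2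
        hdsum hd1S hd2S
  obtain ⟨b', hb', hlt'⟩ := hget
  have : (univ.filter fun j => b' j ≠ 0).card < s := by
    rw [← hS]; exact hlt'
  exact Nat.find_min hPex this ⟨b', hb', rfl⟩
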